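/- Let (J_n) be the jump chain with source-sink structure: upon hitting P it restarts at ρ, and E^ξ[σ_P] < ∞ for every initial distribution ξ. Suppose the aperiodicity condition gcd{n ≥ 1 : P^ρ(σ_P = n−1) > 0} = 1 holds. Then for every probability measure ξ on M, the distribution of J_n started from ξ converges to μ in total variation: ‖ξK^n − μ‖_TV → 0 as n → ∞. In particular the invariant probability measure μ is unique. -/

import Mathlib

open MeasureTheory ProbabilityTheory Filter Set

/-- Killed iterates: `killedSeq K P ξ n C = P^ξ(J_n ∈ C, σ_P ≥ n)`; in particular
`killedSeq K P ρ (n-1) P = P^ρ(σ_P = n-1)` when `ρ(P) = 0`. -/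
noncomputable def killedSeq {M : Type*} [MeasurableSpace M]
    (K : ProbabilityTheory.Kernel M M) (P : Set M) (ξ : Measure M) : ℕ → Measure M
  | 0 => ξ
  | n + 1 => ((killedSeq K P ξ n).restrict Pᶜ).bind K

/-- `n`-step distributions: `iterateK K ξ n = ξ K^n`, the law of `J_n` when `J_0 ~ ξ`. -/
noncomputable def iterateK {M : Type*} [MeasurableSpace M]
    (K : ProbabilityTheory.Kernel M M) (ξ : Measure M) : ℕ → Measure M
  | 0 => ξ
  | n + 1 => (iterateK K ξ n).bind K

/-- Total variation distance `sup_C |μ(C) − ν(C)|` over measurable sets `C`. -/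
noncomputable def tvDist {M : Type*} [MeasurableSpace M] (μ ν : Measure M) : ℝ :=
  ⨆ C : {C : Set M // MeasurableSet C}, |(μ C).toReal - (ν C).toReal|

set_option linter.unusedSectionVars false
set_option maxHeartbeats 1000000

section RenewalTheory
open Finset

/-- If a set of naturals has gcd 1, the additive monoid it generates contains all
sufficiently large naturals. -/
lemma exists_semigroup_bound (S : Set ℕ) (hS : ∀ d : ℕ, (∀ n ∈ S, d ∣ n) → d = 1) :
    ∃ N₀ : ℕ, ∀ t : ℕ, N₀ ≤ t → t ∈ AddSubmonoid.closure S := by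
  classical
  -- the subgroup of ℤ generated by S
  set G : AddSubgroup ℤ := AddSubgroup.closure ((↑) '' S : Set ℤ) with hG
  obtain ⟨d, hd⟩ := Int.subgroup_cyclic G
  have hdvd : ∀ n ∈ S, d.natAbs ∣ n := by
    intro n hn
    have : (n : ℤ) ∈ G := AddSubgroup.subset_closure ⟨n, hn, rfl⟩
    rw [hd] at this
    rw [AddSubgroup.mem_closure_singleton] at this
    obtain ⟨k, hk⟩ := this
    have : d ∣ (n : ℤ) := ⟨k, by rw [← hk, zsmul_eq_mul]; push_cast; ring⟩
    exact Int.natAbs_dvd_natAbs.mpr (by simpa using this)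
  have hd1 : d.natAbs = 1 := hS _ hdvd
  have h1G : (1 : ℤ) ∈ G := by
    rw [hd, AddSubgroup.mem_closure_singleton]
    rcases Int.natAbs_eq_iff.mp hd1 with h | h
    · exact ⟨1, by simp [h]⟩
    · exact ⟨-1, by simp [h]⟩
  -- elements of G are differences of elements of the ℕ-monoid closure
  have hdiff : ∀ z ∈ G, ∃ A ∈ AddSubmonoid.closure S, ∃ B ∈ AddSubmonoid.closure S,
      (z : ℤ) = (A : ℤ) - B := by
    intro z hz
    refine AddSubgroup.closure_induction ?_ ?_ ?_ ?_ hz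
    · rintro x ⟨n, hn, rfl⟩
      exact ⟨n, AddSubmonoid.subset_closure hn, 0, AddSubmonoid.zero_mem _, by simp⟩
    · exact ⟨0, AddSubmonoid.zero_mem _, 0, AddSubmonoid.zero_mem _, by simp⟩
    · rintro x y - - ⟨A, hA, B, hB, rfl⟩ ⟨A', hA', B', hB', rfl⟩
      exact ⟨A + A', AddSubmonoid.add_mem _ hA hA', B + B', AddSubmonoid.add_mem _ hB hB',
        by push_cast; ring⟩
    · rintro x - ⟨A, hA, B, hB, rfl⟩
      exact ⟨B, hB, A, hA, by ring⟩
  obtain ⟨A, hA, B, hB, hAB⟩ := hdiff 1 h1G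
  have hABn : A = B + 1 := by exact_mod_cast (by linarith [hAB] : (A : ℤ) = B + 1)
  refine ⟨B * B, fun t ht => ?_⟩
  rcases Nat.eq_zero_or_pos B with hB0 | hBpos
  · -- B = 0, so A = 1 generates everything
    have hA1 : (1 : ℕ) ∈ AddSubmonoid.closure S := by
      rw [hB0] at hABn; rwa [hABn] at hA
    have : t = t • (1 : ℕ) := by simp
    rw [this]
    exact AddSubmonoid.nsmul_mem _ hA1 t
  · set q := t / B with hq
    set r := t % B with hr
    have hrB : r < B := Nat.mod_lt _ hBpos
    have hqr : r ≤ q := by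
      have hqB : B ≤ q := by
        rw [hq]
        exact Nat.le_div_iff_mul_le hBpos |>.mpr (by nlinarith)
      omega
    have ht' : t = (q - r) • B + r • A := by
      have h1 : q * B + r = t := by rw [hq, hr]; exact Nat.div_add_mod' t B
      obtain ⟨X, hX⟩ : ∃ X, q = X + r := ⟨q - r, by omega⟩
      have hqr' : q - r = X := by omega
      have h2 : (q - r) * B + r * A = q * B + r := by rw [hqr', hABn, hX]; ring
      rw [smul_eq_mul, smul_eq_mul, h2, h1]
    rw [ht']
    exact AddSubmonoid.add_mem _ (AddSubmonoid.nsmul_mem _ hB _) (AddSubmonoid.nsmul_mem _ hA _)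


variable {V : ℕ → ℝ}

lemma bddV (h1 : ∀ n, V n ≤ 1) : IsBoundedUnder (· ≤ ·) atTop V :=
  isBoundedUnder_of ⟨1, fun n => h1 n⟩

lemma bddVge (h0 : ∀ n, 0 ≤ V n) : IsBoundedUnder (· ≥ ·) atTop V :=
  isBoundedUnder_of ⟨0, fun n => h0 n⟩

lemma tendsto_sub_const_atTop {φ : ℕ → ℕ} (h : Tendsto φ atTop atTop) (s : ℕ) :
    Tendsto (fun j => φ j - s) atTop atTop :=
  tendsto_atTop.mpr fun b => (h.eventually_ge_atTop (b + s)).mono fun j hj => by omega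

lemma limsup_comp_le (h0 : ∀ n, 0 ≤ V n) (h1 : ∀ n, V n ≤ 1)
    {ψ : ℕ → ℕ} (hψ : Tendsto ψ atTop atTop) :
    limsup (fun j => V (ψ j)) atTop ≤ limsup V atTop := by
  by_contra h
  push_neg at h
  obtain ⟨x, hx1, hx2⟩ := exists_between h
  have hev : ∀ᶠ n in atTop, V n < x := eventually_lt_of_limsup_lt hx1 (bddV h1)
  have hev' : ∀ᶠ j in atTop, V (ψ j) < x := hψ.eventually hev
  have : limsup (fun j => V (ψ j)) atTop ≤ x :=
    limsup_le_of_le (bddVge (V := fun j => V (ψ j)) fun j => h0 (ψ j)).isCoboundedUnder_flip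
      (hev'.mono fun j hj => hj.le)
  exact absurd this (not_le.mpr hx2)

lemma le_liminf_comp (h0 : ∀ n, 0 ≤ V n) (h1 : ∀ n, V n ≤ 1)
    {ψ : ℕ → ℕ} (hψ : Tendsto ψ atTop atTop) :
    liminf V atTop ≤ liminf (fun j => V (ψ j)) atTop := by
  by_contra h
  push_neg at h
  obtain ⟨x, hx1, hx2⟩ := exists_between h
  have hev : ∀ᶠ n in atTop, x < V n := eventually_lt_of_lt_liminf hx2 (bddVge h0)
  have hev' : ∀ᶠ j in atTop, x < V (ψ j) := hψ.eventually hev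
  have : x ≤ liminf (fun j => V (ψ j)) atTop :=
    le_liminf_of_le (bddV (V := fun j => V (ψ j)) fun j => h1 (ψ j)).isCoboundedUnder_flip
      (hev'.mono fun j hj => hj.le)
  exact absurd this (not_le.mpr hx1)

lemma exists_subseq_tendsto_limsup (h0 : ∀ n, 0 ≤ V n) (h1 : ∀ n, V n ≤ 1) :
    ∃ φ : ℕ → ℕ, Tendsto φ atTop atTop ∧
      Tendsto (fun k => V (φ k)) atTop (nhds (limsup V atTop)) := by
  set L := limsup V atTop with hL
  have hfreq : ∀ k : ℕ, ∃ᶠ n in atTop, |V n - L| < 1 / (k + 1) := by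
    intro k
    have hpos : (0 : ℝ) < 1 / (k + 1) := by positivity
    have h1' : ∀ᶠ n in atTop, V n < L + 1 / (k + 1) :=
      eventually_lt_of_limsup_lt (by linarith) (bddV h1)
    have h2' : ∃ᶠ n in atTop, L - 1 / (k + 1) < V n :=
      frequently_lt_of_lt_limsup (bddVge h0).isCoboundedUnder_flip (by linarith)
    exact (h2'.and_eventually h1').mono fun n ⟨ha, hb⟩ => abs_sub_lt_iff.mpr ⟨by linarith, by linarith⟩
  obtain ⟨φ, hmono, hφ⟩ := extraction_forall_of_frequently hfreq
  refine ⟨φ, hmono.tendsto_atTop, ?_⟩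
  have hz : Tendsto (fun k => V (φ k) - L) atTop (nhds 0) :=
    squeeze_zero_norm (fun k => by rw [Real.norm_eq_abs]; exact (hφ k).le)
      tendsto_one_div_add_atTop_nhds_zero_nat
  have := hz.add_const L
  simpa using this

lemma exists_subseq_tendsto_liminf (h0 : ∀ n, 0 ≤ V n) (h1 : ∀ n, V n ≤ 1) :
    ∃ φ : ℕ → ℕ, Tendsto φ atTop atTop ∧
      Tendsto (fun k => V (φ k)) atTop (nhds (liminf V atTop)) := by
  set L := liminf V atTop with hL
  have hfreq : ∀ k : ℕ, ∃ᶠ n in atTop, |V n - L| < 1 / (k + 1) := by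
    intro k
    have hpos : (0 : ℝ) < 1 / (k + 1) := by positivity
    have h1' : ∀ᶠ n in atTop, L - 1 / (k + 1) < V n :=
      eventually_lt_of_lt_liminf (by linarith) (bddVge h0)
    have h2' : ∃ᶠ n in atTop, V n < L + 1 / (k + 1) :=
      frequently_lt_of_liminf_lt (bddV h1).isCoboundedUnder_flip (by linarith)
    exact (h2'.and_eventually h1').mono fun n ⟨ha, hb⟩ => abs_sub_lt_iff.mpr ⟨by linarith, by linarith⟩
  obtain ⟨φ, hmono, hφ⟩ := extraction_forall_of_frequently hfreq
  refine ⟨φ, hmono.tendsto_atTop, ?_⟩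
  have hz : Tendsto (fun k => V (φ k) - L) atTop (nhds 0) :=
    squeeze_zero_norm (fun k => by rw [Real.norm_eq_abs]; exact (hφ k).le)
      tendsto_one_div_add_atTop_nhds_zero_nat
  have := hz.add_const L
  simpa using this


variable {a V : ℕ → ℝ}

lemma shift_limsup (ha0 : ∀ k, 0 ≤ a k) (hsum : HasSum a 1)
    (hVnn : ∀ n, 0 ≤ V n) (hV1 : ∀ n, V n ≤ 1)
    (hVrec : ∀ n, V (n + 1) = ∑ k ∈ Finset.range (n + 1), a k * V (n - k))
    {s : ℕ} (hs1 : 1 ≤ s) (has : 0 < a (s - 1))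
    {φ : ℕ → ℕ} (hφ : Tendsto φ atTop atTop)
    (hconv : Tendsto (fun j => V (φ j)) atTop (nhds (limsup V atTop))) :
    Tendsto (fun j => V (φ j - s)) atTop (nhds (limsup V atTop)) := by
  set L := limsup V atTop with hLdef
  set α := a (s - 1) with hα
  have hφs : Tendsto (fun j => φ j - s) atTop atTop := tendsto_sub_const_atTop hφ s
  have hL0 : 0 ≤ L :=
    le_limsup_of_frequently_le (Frequently.of_forall fun n => hVnn n) (bddV hV1)
  have hL1 : L ≤ 1 :=
    limsup_le_of_le (bddVge hVnn).isCoboundedUnder_flip (Eventually.of_forall hV1)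
  have hup : limsup (fun j => V (φ j - s)) atTop ≤ L := limsup_comp_le hVnn hV1 hφs
  have hpartial : ∀ m, ∑ k ∈ Finset.range m, a k ≤ 1 :=
    fun m => sum_le_hasSum _ (fun k _ => ha0 k) hsum
  -- key eventual lower bound
  have key : ∀ ε : ℝ, 0 < ε → ∀ᶠ j in atTop, L - 3 * ε / α ≤ V (φ j - s) := by
    intro ε hε
    -- choose N
    obtain ⟨N₁, hN₁⟩ : ∃ N₁, ∀ m ≥ N₁, 1 - ∑ k ∈ Finset.range m, a k < ε := by
      have := hsum.tendsto_sum_nat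
      have h2 := this.eventually (eventually_gt_nhds (by linarith : (1 : ℝ) - ε < 1))
      obtain ⟨N₁, hN₁⟩ := eventually_atTop.mp h2
      exact ⟨N₁, fun m hm => by linarith [hN₁ m hm]⟩
    set N := max (s - 1) N₁ with hN
    have hsN : s - 1 ≤ N := le_max_left _ _
    have htail : 1 - ∑ k ∈ Finset.range (N + 1), a k < ε :=
      hN₁ (N + 1) (by omega)
    -- eventual facts
    have E1 : ∀ᶠ j in atTop, ∀ k ∈ Finset.range (N + 1), V (φ j - 1 - k) < L + ε := by
      rw [eventually_all_finset]
      intro k _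
      have hk : Tendsto (fun j => φ j - 1 - k) atTop atTop := by
        have := tendsto_sub_const_atTop hφ (1 + k)
        refine this.congr fun j => ?_
        omega
      exact hk.eventually (eventually_lt_of_limsup_lt (by linarith) (bddV hV1))
    have E2 : ∀ᶠ j in atTop, L - ε < V (φ j) :=
      hconv.eventually (eventually_gt_nhds (by linarith))
    have E3 : ∀ᶠ j in atTop, N + 2 ≤ φ j := hφ.eventually_ge_atTop (N + 2)
    filter_upwards [E1, E2, E3] with j h1 h2 h3
    -- the recursion at φ j
    have hrec : V (φ j) = ∑ k ∈ Finset.range (φ j), a k * V (φ j - 1 - k) := by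
      have h := hVrec (φ j - 1)
      rw [Nat.sub_add_cancel (by omega)] at h
      exact h
    -- split the sum
    have hsplit : ∑ k ∈ Finset.range (φ j), a k * V (φ j - 1 - k)
        = ∑ k ∈ Finset.range (N + 1), a k * V (φ j - 1 - k)
          + ∑ k ∈ Finset.Ico (N + 1) (φ j), a k * V (φ j - 1 - k) :=
      (Finset.sum_range_add_sum_Ico _ (by omega)).symm
    -- bound the tail
    have htailbd : ∑ k ∈ Finset.Ico (N + 1) (φ j), a k * V (φ j - 1 - k) ≤ ε := by
      have h4 : ∑ k ∈ Finset.Ico (N + 1) (φ j), a k * V (φ j - 1 - k)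
          ≤ ∑ k ∈ Finset.Ico (N + 1) (φ j), a k :=
        Finset.sum_le_sum fun k _ => mul_le_of_le_one_right (ha0 k) (hV1 _)
      have h5 : ∑ k ∈ Finset.range (N + 1), a k + ∑ k ∈ Finset.Ico (N + 1) (φ j), a k
          = ∑ k ∈ Finset.range (φ j), a k :=
        Finset.sum_range_add_sum_Ico _ (by omega)
      have h6 := hpartial (φ j)
      linarith
    -- main part
    have hmem : s - 1 ∈ Finset.range (N + 1) := Finset.mem_range.mpr (by omega)
    have hmain : ∑ k ∈ Finset.range (N + 1), a k * V (φ j - 1 - k)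
        ≤ α * V (φ j - s) + (1 - α) * (L + ε) := by
      rw [← Finset.sum_erase_add _ _ hmem]
      have hterm : a (s - 1) * V (φ j - 1 - (s - 1)) = α * V (φ j - s) := by
        rw [hα]
        congr 2
        omega
      have hrest : ∑ k ∈ (Finset.range (N + 1)).erase (s - 1), a k * V (φ j - 1 - k)
          ≤ (1 - α) * (L + ε) := by
        have hb : ∑ k ∈ (Finset.range (N + 1)).erase (s - 1), a k * V (φ j - 1 - k)
            ≤ ∑ k ∈ (Finset.range (N + 1)).erase (s - 1), a k * (L + ε) := by
          refine Finset.sum_le_sum fun k hk => ?_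
          exact mul_le_mul_of_nonneg_left
            (le_of_lt (h1 k (Finset.mem_of_mem_erase hk))) (ha0 k)
        rw [← Finset.sum_mul] at hb
        have hc : ∑ k ∈ (Finset.range (N + 1)).erase (s - 1), a k ≤ 1 - α := by
          have := Finset.sum_erase_add (Finset.range (N + 1)) a hmem
          have := hpartial (N + 1)
          linarith [Finset.sum_erase_add (Finset.range (N + 1)) a hmem]
        have hLε : (0 : ℝ) ≤ L + ε := by linarith
        nlinarith [hb, hc, hLε]
      linarith [hterm, hrest]
    -- combine
    have hineq : L - ε < α * V (φ j - s) + (1 - α) * (L + ε) + ε := by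
      calc L - ε < V (φ j) := h2
      _ = _ := hrec
      _ = _ := hsplit
      _ ≤ α * V (φ j - s) + (1 - α) * (L + ε) + ε := by linarith [hmain, htailbd]
    have hα1 : α ≤ 1 := by
      have := hpartial s
      have hm : a (s - 1) ≤ ∑ k ∈ Finset.range s, a k := by
        refine Finset.single_le_sum (fun k _ => ha0 k) (Finset.mem_range.mpr (by omega))
      linarith
    -- divide by α
    have : α * (L - 3 * ε / α) ≤ α * V (φ j - s) := by
      have hd : α * (3 * ε / α) = 3 * ε := by field_simp
      nlinarith [hineq, hL1, hα1]
    exact le_of_mul_le_mul_left this has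
  -- conclude liminf ≥ L
  have hlow : L ≤ liminf (fun j => V (φ j - s)) atTop := by
    by_contra hc
    push_neg at hc
    set l := liminf (fun j => V (φ j - s)) atTop with hl
    have hδ : 0 < (L - l) / 2 := by linarith
    have hε : 0 < α * ((L - l) / 2) / 3 := by positivity
    have h := key _ hε
    have : L - 3 * (α * ((L - l) / 2) / 3) / α ≤ l :=
      le_liminf_of_le (bddV (V := fun j => V (φ j - s)) fun j => hV1 _).isCoboundedUnder_flip
        (h.mono fun j hj => hj)
    have heq : 3 * (α * ((L - l) / 2) / 3) / α = (L - l) / 2 := by field_simp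
    rw [heq] at this
    linarith
  -- wrap up
  have hls : liminf (fun j => V (φ j - s)) atTop = L :=
    le_antisymm (le_trans (liminf_le_limsup (bddV fun j => hV1 _) (bddVge fun j => hVnn _)) hup) hlow
  have hus : limsup (fun j => V (φ j - s)) atTop = L :=
    le_antisymm hup (le_trans hlow (liminf_le_limsup (bddV fun j => hV1 _) (bddVge fun j => hVnn _)))
  exact tendsto_of_liminf_eq_limsup hls hus (bddV fun j => hV1 _) (bddVge fun j => hVnn _)

lemma shift_liminf (ha0 : ∀ k, 0 ≤ a k) (hsum : HasSum a 1)
    (hVnn : ∀ n, 0 ≤ V n) (hV1 : ∀ n, V n ≤ 1)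
    (hVrec : ∀ n, V (n + 1) = ∑ k ∈ Finset.range (n + 1), a k * V (n - k))
    {s : ℕ} (hs1 : 1 ≤ s) (has : 0 < a (s - 1))
    {φ : ℕ → ℕ} (hφ : Tendsto φ atTop atTop)
    (hconv : Tendsto (fun j => V (φ j)) atTop (nhds (liminf V atTop))) :
    Tendsto (fun j => V (φ j - s)) atTop (nhds (liminf V atTop)) := by
  set L := liminf V atTop with hLdef
  set α := a (s - 1) with hα
  have hφs : Tendsto (fun j => φ j - s) atTop atTop := tendsto_sub_const_atTop hφ s
  have hL0 : 0 ≤ L :=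
    le_liminf_of_le (bddV hV1).isCoboundedUnder_flip (Eventually.of_forall hVnn)
  have hL1 : L ≤ 1 :=
    liminf_le_of_frequently_le (Frequently.of_forall fun n => hV1 n) (bddVge hVnn)
  have hlow : L ≤ liminf (fun j => V (φ j - s)) atTop := le_liminf_comp hVnn hV1 hφs
  have hpartial : ∀ m, ∑ k ∈ Finset.range m, a k ≤ 1 :=
    fun m => sum_le_hasSum _ (fun k _ => ha0 k) hsum
  have key : ∀ ε : ℝ, 0 < ε → ε ≤ 1 → ∀ᶠ j in atTop, V (φ j - s) ≤ L + 4 * ε / α := by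
    intro ε hε hε1
    obtain ⟨N₁, hN₁⟩ : ∃ N₁, ∀ m ≥ N₁, 1 - ∑ k ∈ Finset.range m, a k < ε := by
      have := hsum.tendsto_sum_nat
      have h2 := this.eventually (eventually_gt_nhds (by linarith : (1 : ℝ) - ε < 1))
      obtain ⟨N₁, hN₁⟩ := eventually_atTop.mp h2
      exact ⟨N₁, fun m hm => by linarith [hN₁ m hm]⟩
    set N := max (s - 1) N₁ with hN
    have hsN : s - 1 ≤ N := le_max_left _ _
    have htail : 1 - ∑ k ∈ Finset.range (N + 1), a k < ε := hN₁ (N + 1) (by omega)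
    have E1 : ∀ᶠ j in atTop, ∀ k ∈ Finset.range (N + 1), L - ε < V (φ j - 1 - k) := by
      rw [eventually_all_finset]
      intro k _
      have hk : Tendsto (fun j => φ j - 1 - k) atTop atTop := by
        have := tendsto_sub_const_atTop hφ (1 + k)
        refine this.congr fun j => ?_
        omega
      exact hk.eventually (eventually_lt_of_lt_liminf (by linarith) (bddVge hVnn))
    have E2 : ∀ᶠ j in atTop, V (φ j) < L + ε :=
      hconv.eventually (eventually_lt_nhds (by linarith))
    have E3 : ∀ᶠ j in atTop, N + 2 ≤ φ j := hφ.eventually_ge_atTop (N + 2)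
    filter_upwards [E1, E2, E3] with j h1 h2 h3
    have hrec : V (φ j) = ∑ k ∈ Finset.range (φ j), a k * V (φ j - 1 - k) := by
      have h := hVrec (φ j - 1)
      rw [Nat.sub_add_cancel (by omega)] at h
      exact h
    have hsplit : ∑ k ∈ Finset.range (N + 1), a k * V (φ j - 1 - k)
        ≤ ∑ k ∈ Finset.range (φ j), a k * V (φ j - 1 - k) := by
      rw [← Finset.sum_range_add_sum_Ico _ (show N + 1 ≤ φ j by omega)]
      have : (0 : ℝ) ≤ ∑ k ∈ Finset.Ico (N + 1) (φ j), a k * V (φ j - 1 - k) :=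
        Finset.sum_nonneg fun k _ => mul_nonneg (ha0 k) (hVnn _)
      linarith
    have hmem : s - 1 ∈ Finset.range (N + 1) := Finset.mem_range.mpr (by omega)
    have hmain : α * V (φ j - s) + (1 - α) * (L - ε) - 2 * ε
        ≤ ∑ k ∈ Finset.range (N + 1), a k * V (φ j - 1 - k) := by
      rw [← Finset.sum_erase_add _ _ hmem]
      have hterm : a (s - 1) * V (φ j - 1 - (s - 1)) = α * V (φ j - s) := by
        rw [hα]; congr 2; omega
      have hrest : ∑ k ∈ (Finset.range (N + 1)).erase (s - 1), a k * (L - ε)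
          ≤ ∑ k ∈ (Finset.range (N + 1)).erase (s - 1), a k * V (φ j - 1 - k) :=
        Finset.sum_le_sum fun k hk => mul_le_mul_of_nonneg_left
          (le_of_lt (h1 k (Finset.mem_of_mem_erase hk))) (ha0 k)
      rw [← Finset.sum_mul] at hrest
      set A' := ∑ k ∈ (Finset.range (N + 1)).erase (s - 1), a k with hA'
      have hsum_erase : A' + α = ∑ k ∈ Finset.range (N + 1), a k :=
        Finset.sum_erase_add (Finset.range (N + 1)) a hmem
      have hA'le : A' ≤ 1 - α := by linarith [hpartial (N + 1)]
      have hA'ge : 1 - ε - α ≤ A' := by linarith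
      have hprod : (1 - α) * (L - ε) - 2 * ε ≤ A' * (L - ε) := by
        nlinarith [hA'le, hA'ge, hL0, hL1, hε, hε1]
      linarith [hterm, hrest, hprod]
    have hineq : α * V (φ j - s) + (1 - α) * (L - ε) - 2 * ε < L + ε := by
      calc α * V (φ j - s) + (1 - α) * (L - ε) - 2 * ε
          ≤ ∑ k ∈ Finset.range (N + 1), a k * V (φ j - 1 - k) := hmain
      _ ≤ ∑ k ∈ Finset.range (φ j), a k * V (φ j - 1 - k) := hsplit
      _ = V (φ j) := hrec.symm
      _ < L + ε := h2
    have hα1 : α ≤ 1 := by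
      have := hpartial s
      have hm : a (s - 1) ≤ ∑ k ∈ Finset.range s, a k :=
        Finset.single_le_sum (fun k _ => ha0 k) (Finset.mem_range.mpr (by omega))
      linarith
    have hV' : α * V (φ j - s) ≤ α * (L + 4 * ε / α) := by
      have hd : α * (4 * ε / α) = 4 * ε := by field_simp
      nlinarith [hineq, hL0, hα1]
    exact le_of_mul_le_mul_left hV' has
  have hup : limsup (fun j => V (φ j - s)) atTop ≤ L := by
    by_contra hc
    push_neg at hc
    set l := limsup (fun j => V (φ j - s)) atTop with hl
    have hα1 : α ≤ 1 := by
      have := hpartial s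
      have hm : a (s - 1) ≤ ∑ k ∈ Finset.range s, a k :=
        Finset.single_le_sum (fun k _ => ha0 k) (Finset.mem_range.mpr (by omega))
      linarith
    set ε := min 1 (α * ((l - L) / 5)) with hεdef
    have hε : 0 < ε := lt_min one_pos (mul_pos has (by linarith))
    have hε1 : ε ≤ 1 := min_le_left _ _
    have h := key ε hε hε1
    have hlim : l ≤ L + 4 * ε / α :=
      limsup_le_of_le (bddVge (V := fun j => V (φ j - s)) fun j => hVnn _).isCoboundedUnder_flip h
    have hεle : ε ≤ α * ((l - L) / 5) := min_le_right _ _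
    have hdiv : 4 * ε / α ≤ 4 * ((l - L) / 5) := by
      rw [div_le_iff₀ has]
      nlinarith
    linarith
  have hls : liminf (fun j => V (φ j - s)) atTop = L :=
    le_antisymm (le_trans (liminf_le_limsup (bddV fun j => hV1 _) (bddVge fun j => hVnn _)) hup) hlow
  have hus : limsup (fun j => V (φ j - s)) atTop = L :=
    le_antisymm hup (le_trans hlow (liminf_le_limsup (bddV fun j => hV1 _) (bddVge fun j => hVnn _)))
  exact tendsto_of_liminf_eq_limsup hls hus (bddV fun j => hV1 _) (bddVge fun j => hVnn _)

variable {b : ℕ → ℝ} {c : ℝ}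

lemma renewal_identity (hb : ∀ n, b n = 1 - ∑ k ∈ Finset.range n, a k)
    (hV0 : V 0 = 1)
    (hVrec : ∀ n, V (n + 1) = ∑ k ∈ Finset.range (n + 1), a k * V (n - k)) :
    ∀ n, ∑ i ∈ Finset.range (n + 1), b i * V (n - i) = 1 := by
  have hb0 : b 0 = 1 := by rw [hb]; simp
  intro n
  induction n with
  | zero => simp [hb0, hV0]
  | succ n ih =>
      rw [Finset.sum_range_succ' (fun i => b i * V (n + 1 - i)) (n + 1)]
      have h1 : ∀ i ∈ Finset.range (n + 1), b (i + 1) * V (n + 1 - (i + 1))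
          = b i * V (n - i) - a i * V (n - i) := by
        intro i _
        have : b (i + 1) = b i - a i := by
          rw [hb, hb, Finset.sum_range_succ]; ring
        rw [this, Nat.succ_sub_succ]; ring
      rw [Finset.sum_congr rfl h1, Finset.sum_sub_distrib, ih, ← hVrec n, hb0, Nat.sub_zero]
      ring

lemma renewal_dct (hb0 : ∀ n, 0 ≤ b n) (hc : HasSum b c)
    (hident : ∀ n, ∑ i ∈ Finset.range (n + 1), b i * V (n - i) = 1)
    (hVnn : ∀ n, 0 ≤ V n) (hV1 : ∀ n, V n ≤ 1)
    {ψ : ℕ → ℕ} (hψ : Tendsto ψ atTop atTop) {x : ℝ}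
    (h : ∀ i, Tendsto (fun j => V (ψ j - i)) atTop (nhds x)) : c * x = 1 := by
  set f : ℕ → ℕ → ℝ := fun j i => if i ≤ ψ j then b i * V (ψ j - i) else 0 with hf
  have h1 : ∀ j, ∑' i, f j i = 1 := by
    intro j
    rw [tsum_eq_sum (s := Finset.range (ψ j + 1))
      (fun i hi => by
        simp only [hf]
        exact if_neg (fun hle => hi (Finset.mem_range.mpr (Nat.lt_succ_of_le hle))))]
    rw [Finset.sum_congr rfl (fun i hi => ?_), hident (ψ j)]
    simp only [hf]
    rw [if_pos (by simpa using Nat.lt_succ_iff.mp (Finset.mem_range.mp hi))]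
  have h2 : ∀ i, Tendsto (fun j => f j i) atTop (nhds (b i * x)) := by
    intro i
    refine Tendsto.congr' ?_ (Tendsto.const_mul (b i) (h i))
    filter_upwards [hψ.eventually_ge_atTop i] with j hj
    simp only [hf]
    rw [if_pos hj]
  have h3 : ∀ j i, ‖f j i‖ ≤ b i := by
    intro j i
    simp only [hf]
    split_ifs with hle
    · rw [Real.norm_eq_abs, abs_of_nonneg (mul_nonneg (hb0 i) (hVnn _))]
      exact mul_le_of_le_one_right (hb0 i) (hV1 _)
    · simp [hb0 i]
  have hlim := tendsto_tsum_of_dominated_convergence hc.summable h2 (Eventually.of_forall h3)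
  have hconst : Tendsto (fun j => ∑' i, f j i) atTop (nhds 1) := by
    simp only [h1]; exact tendsto_const_nhds
  have := tendsto_nhds_unique hconst hlim
  rw [this]
  rw [tsum_mul_right, hc.tsum_eq, mul_comm]

theorem renewal_EFP (a b V : ℕ → ℝ) (c : ℝ)
    (ha0 : ∀ k, 0 ≤ a k) (hsum : HasSum a 1)
    (hb : ∀ n, b n = 1 - ∑ k ∈ Finset.range n, a k)
    (hc : HasSum b c)
    (hV0 : V 0 = 1) (hVnn : ∀ n, 0 ≤ V n) (hV1 : ∀ n, V n ≤ 1)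
    (hVrec : ∀ n, V (n + 1) = ∑ k ∈ Finset.range (n + 1), a k * V (n - k))
    (hgcd : ∀ d : ℕ, (∀ n : ℕ, 1 ≤ n → a (n - 1) ≠ 0 → d ∣ n) → d = 1) :
    Tendsto V atTop (nhds c⁻¹) := by
  have hb0 : ∀ n, 0 ≤ b n := by
    intro n
    rw [hb]
    linarith [sum_le_hasSum (Finset.range n) (fun k _ => ha0 k) hsum]
  have hident := renewal_identity hb hV0 hVrec
  set S : Set ℕ := {n | 1 ≤ n ∧ a (n - 1) ≠ 0} with hS
  obtain ⟨N₀, hN₀⟩ := exists_semigroup_bound S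
    (fun d hd => hgcd d (fun n h1 h2 => hd n ⟨h1, h2⟩))
  -- closure shifts preserve limits along subsequences tending to limsup/liminf
  have hshift : ∀ (L : ℝ), (L = limsup V atTop ∨ L = liminf V atTop) →
      ∀ (φ : ℕ → ℕ), Tendsto φ atTop atTop →
      Tendsto (fun j => V (φ j)) atTop (nhds L) →
      ∀ t ∈ AddSubmonoid.closure S, Tendsto (fun j => V (φ j - t)) atTop (nhds L) := by
    intro L hL φ hφ hconv t ht
    obtain ⟨l, hl, rfl⟩ := AddSubmonoid.exists_list_of_mem_closure ht
    clear ht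
    induction l generalizing φ with
    | nil => simpa using hconv
    | cons s l ih =>
        have hs : s ∈ S := hl s List.mem_cons_self
        have hrest : Tendsto (fun j => V (φ j - l.sum)) atTop (nhds L) :=
          ih φ hφ hconv (fun y hy => hl y (List.mem_cons_of_mem s hy))
        have hφ' : Tendsto (fun j => φ j - l.sum) atTop atTop := tendsto_sub_const_atTop hφ _
        have haspos : 0 < a (s - 1) := lt_of_le_of_ne (ha0 _) (Ne.symm hs.2)
        have happ : Tendsto (fun j => V ((φ j - l.sum) - s)) atTop (nhds L) := by
          rcases hL with rfl | rfl
          · exact shift_limsup ha0 hsum hVnn hV1 hVrec hs.1 haspos hφ' hrest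
          · exact shift_liminf ha0 hsum hVnn hV1 hVrec hs.1 haspos hφ' hrest
        refine happ.congr fun j => ?_
        rw [Nat.sub_sub]
        congr 2
        rw [List.sum_cons]
        omega
  -- apply to limsup and liminf subsequences
  have hL1' : ∀ L : ℝ, (L = limsup V atTop ∨ L = liminf V atTop) →
      (∀ (φ : ℕ → ℕ), Tendsto φ atTop atTop →
        Tendsto (fun j => V (φ j)) atTop (nhds L) → c * L = 1) := by
    intro L hL φ hφ hconv
    have hψ : Tendsto (fun j => φ j - N₀) atTop atTop := tendsto_sub_const_atTop hφ _
    refine renewal_dct hb0 hc hident hVnn hV1 hψ (fun i => ?_)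
    have := hshift L hL φ hφ hconv (N₀ + i) (hN₀ _ (Nat.le_add_right _ _))
    refine this.congr fun j => ?_
    rw [Nat.sub_sub]
  obtain ⟨φu, hφu, hconvu⟩ := exists_subseq_tendsto_limsup hVnn hV1
  obtain ⟨φl, hφl, hconvl⟩ := exists_subseq_tendsto_liminf hVnn hV1
  have hcu : c * limsup V atTop = 1 := hL1' _ (Or.inl rfl) φu hφu hconvu
  have hcl : c * liminf V atTop = 1 := hL1' _ (Or.inr rfl) φl hφl hconvl
  have hc1 : 1 ≤ c := by
    have := hc.summable.le_tsum 0 (fun j _ => hb0 j)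
    rw [hc.tsum_eq] at this
    have hb01 : b 0 = 1 := by rw [hb]; simp
    linarith
  have hcne : c ≠ 0 := by linarith
  have hu : limsup V atTop = c⁻¹ := by field_simp; linarith [hcu]
  have hl' : liminf V atTop = c⁻¹ := by field_simp; linarith [hcl]
  exact tendsto_of_liminf_eq_limsup hl' hu (bddV hV1) (bddVge hVnn)

lemma conv_tendsto_zero (bb x : ℕ → ℝ) (hb0 : ∀ n, 0 ≤ bb n) (hbs : Summable bb)
    (hx0 : ∀ n, 0 ≤ x n) (D : ℝ) (hxD : ∀ n, x n ≤ D)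
    (hx : Tendsto x atTop (nhds 0)) :
    Tendsto (fun m => ∑ i ∈ Finset.range (m + 1), x (m - i) * bb i) atTop (nhds 0) := by
  have hD0 : 0 ≤ D := le_trans (hx0 0) (hxD 0)
  have key : ∀ ε : ℝ, 0 < ε → ∃ M, ∀ m ≥ M,
      ∑ i ∈ Finset.range (m + 1), x (m - i) * bb i ≤ ε := by
    intro ε hε
    set D' := max D 1 with hD'
    have hD'pos : 0 < D' := lt_of_lt_of_le one_pos (le_max_right _ _)
    set Sb := ∑' i, bb i with hSb
    have hSb0 : 0 ≤ Sb := tsum_nonneg hb0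
    -- tail of b
    obtain ⟨N, hN⟩ : ∃ N, ∑' i, bb (i + N) < ε / (2 * D') := by
      have ht : Tendsto (fun n => ∑' i, bb (i + n)) atTop (nhds 0) :=
        tendsto_sum_nat_add bb
      have := (ht.eventually (eventually_lt_nhds (by positivity : (0:ℝ) < ε / (2 * D')))).exists
      exact this
    -- smallness of x
    obtain ⟨M₁, hM₁⟩ : ∃ M₁, ∀ n ≥ M₁, x n < ε / (2 * (Sb + 1)) := by
      have := (hx.eventually (eventually_lt_nhds (by positivity : (0:ℝ) < ε / (2 * (Sb + 1)))))
      exact eventually_atTop.mp this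
    refine ⟨M₁ + N, fun m hm => ?_⟩
    have hsplit : ∑ i ∈ Finset.range (m + 1), x (m - i) * bb i
        = ∑ i ∈ Finset.range N, x (m - i) * bb i
          + ∑ i ∈ Finset.Ico N (m + 1), x (m - i) * bb i :=
      (Finset.sum_range_add_sum_Ico _ (by omega)).symm
    have hfirst : ∑ i ∈ Finset.range N, x (m - i) * bb i ≤ ε / 2 := by
      have h1 : ∀ i ∈ Finset.range N, x (m - i) * bb i ≤ ε / (2 * (Sb + 1)) * bb i := by
        intro i hi
        have : m - i ≥ M₁ := by
          have := Finset.mem_range.mp hi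
          omega
        exact mul_le_mul_of_nonneg_right (le_of_lt (hM₁ _ this)) (hb0 i)
      calc ∑ i ∈ Finset.range N, x (m - i) * bb i
          ≤ ∑ i ∈ Finset.range N, ε / (2 * (Sb + 1)) * bb i := Finset.sum_le_sum h1
        _ = ε / (2 * (Sb + 1)) * ∑ i ∈ Finset.range N, bb i := by rw [Finset.mul_sum]
        _ ≤ ε / (2 * (Sb + 1)) * Sb := by
            refine mul_le_mul_of_nonneg_left ?_ (by positivity)
            exact hbs.sum_le_tsum _ (fun i _ => hb0 i)
        _ ≤ ε / 2 := by
            rw [div_mul_eq_mul_div, div_le_iff₀ (by positivity)]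
            nlinarith
    have hsecond : ∑ i ∈ Finset.Ico N (m + 1), x (m - i) * bb i ≤ ε / 2 := by
      have h1 : ∀ i ∈ Finset.Ico N (m + 1), x (m - i) * bb i ≤ D' * bb i := by
        intro i _
        exact mul_le_mul_of_nonneg_right (le_trans (hxD _) (le_max_left _ _)) (hb0 i)
      have h2 : ∑ i ∈ Finset.Ico N (m + 1), bb i ≤ ∑' i, bb (i + N) := by
        rw [Finset.sum_Ico_eq_sum_range]
        rw [Finset.sum_congr rfl (fun i _ => by rw [add_comm N i])]
        exact ((summable_nat_add_iff N).mpr hbs).sum_le_tsum _ (fun i _ => hb0 _)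
      calc ∑ i ∈ Finset.Ico N (m + 1), x (m - i) * bb i
          ≤ ∑ i ∈ Finset.Ico N (m + 1), D' * bb i := Finset.sum_le_sum h1
        _ = D' * ∑ i ∈ Finset.Ico N (m + 1), bb i := by rw [Finset.mul_sum]
        _ ≤ D' * (ε / (2 * D')) :=
            mul_le_mul_of_nonneg_left (le_trans h2 (le_of_lt hN)) (le_of_lt hD'pos)
        _ = ε / 2 := by field_simp
    rw [hsplit]
    linarith
  rw [Metric.tendsto_atTop]
  intro ε hε
  obtain ⟨M, hM⟩ := key (ε / 2) (by linarith)
  refine ⟨M, fun m hm => ?_⟩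
  rw [Real.dist_eq, sub_zero, abs_of_nonneg
    (Finset.sum_nonneg fun i _ => mul_nonneg (hx0 _) (hb0 i))]
  linarith [hM m hm]

end RenewalTheory

section MeasurePart
variable {M : Type*} [MeasurableSpace M] (K : Kernel M M) [IsMarkovKernel K]

lemma bindK_apply (μ : Measure M) {C : Set M} (hC : MeasurableSet C) :
    μ.bind ⇑K C = ∫⁻ x, K x C ∂μ :=
  Measure.bind_apply hC K.measurable.aemeasurable

lemma bindK_add (μ ν : Measure M) : (μ + ν).bind ⇑K = μ.bind ⇑K + ν.bind ⇑K := by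
  ext C hC
  simp [bindK_apply K _ hC, lintegral_add_measure]

lemma bindK_smul (c : ENNReal) (μ : Measure M) : (c • μ).bind ⇑K = c • μ.bind ⇑K := by
  ext C hC
  simp [bindK_apply K _ hC, lintegral_smul_measure]

lemma bindK_finsum {ι : Type*} (s : Finset ι) (f : ι → Measure M) :
    (∑ i ∈ s, f i).bind ⇑K = ∑ i ∈ s, (f i).bind ⇑K := by
  classical
  induction s using Finset.induction with
  | empty => simp [Measure.bind_zero_left]
  | insert a s h ih => rw [Finset.sum_insert h, Finset.sum_insert h, bindK_add, ih]

lemma bindK_univ (μ : Measure M) : μ.bind ⇑K Set.univ = μ Set.univ := by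
  rw [bindK_apply K _ MeasurableSet.univ]
  simp

lemma bindK_mono_univ (μ : Measure M) {C : Set M} (hC : MeasurableSet C) :
    μ.bind ⇑K C ≤ μ Set.univ := by
  rw [bindK_apply K _ hC]
  calc ∫⁻ x, K x C ∂μ ≤ ∫⁻ _, 1 ∂μ := lintegral_mono fun x => prob_le_one
  _ = μ Set.univ := by simp

variable (P : Set M) (ρ : Measure M)

lemma restrict_bind (hP : MeasurableSet P) (hrestart : ∀ x ∈ P, K x = ρ) (μ : Measure M) :
    (μ.restrict P).bind ⇑K = (μ P) • ρ := by
  ext C hC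
  rw [bindK_apply K _ hC]
  rw [setLIntegral_congr_fun hP (fun x hx => by rw [hrestart x hx])]
  simp [Measure.restrict_apply hC, mul_comm]

-- one step lemma
lemma killed_bind (hP : MeasurableSet P) (hrestart : ∀ x ∈ P, K x = ρ) (ξ : Measure M) (n : ℕ) :
    (killedSeq K P ξ n).bind ⇑K
      = killedSeq K P ξ (n + 1) + (killedSeq K P ξ n P) • ρ := by
  conv_lhs => rw [← Measure.restrict_add_restrict_compl
    (μ := killedSeq K P ξ n) hP.compl, compl_compl]
  rw [bindK_add, restrict_bind K P ρ hP hrestart]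
  rfl

-- decomposition
lemma iterate_decomp (hP : MeasurableSet P) (hrestart : ∀ x ∈ P, K x = ρ) (ξ : Measure M) (n : ℕ) :
    iterateK K ξ n = killedSeq K P ξ n
      + ∑ k ∈ Finset.range n, (killedSeq K P ξ k P) • iterateK K ρ (n - 1 - k) := by
  induction n with
  | zero => simp [iterateK, killedSeq]
  | succ n ih =>
      show (iterateK K ξ n).bind ⇑K = _
      rw [ih, bindK_add, bindK_finsum, killed_bind K P ρ hP hrestart]
      have h1 : ∀ k ∈ Finset.range n,
          ((killedSeq K P ξ k P) • iterateK K ρ (n - 1 - k)).bind ⇑K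
            = (killedSeq K P ξ k P) • iterateK K ρ (n - k) := by
        intro k hk
        have hk' := Finset.mem_range.mp hk
        rw [bindK_smul]
        congr 1
        have : n - k = (n - 1 - k) + 1 := by omega
        rw [this]
        rfl
      rw [Finset.sum_congr rfl h1, Finset.sum_range_succ]
      have : ∀ k ∈ Finset.range n, (killedSeq K P ξ k P) • iterateK K ρ (n + 1 - 1 - k)
          = (killedSeq K P ξ k P) • iterateK K ρ (n - k) := by
        intro k hk; rw [show n + 1 - 1 - k = n - k from by omega]
      rw [Finset.sum_congr rfl this]
      have hρ0 : (killedSeq K P ξ n P) • ρ = (killedSeq K P ξ n P) • iterateK K ρ (n + 1 - 1 - n) := by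
        rw [show n + 1 - 1 - n = 0 from by omega]; rfl
      rw [hρ0]
      abel

lemma killed_univ_succ (ξ : Measure M) (n : ℕ) :
    killedSeq K P ξ (n + 1) Set.univ = killedSeq K P ξ n Pᶜ := by
  show ((killedSeq K P ξ n).restrict Pᶜ).bind ⇑K Set.univ = _
  rw [bindK_univ, Measure.restrict_apply MeasurableSet.univ, Set.univ_inter]

lemma killed_univ_le (ξ : Measure M) (hξ : IsProbabilityMeasure ξ) (n : ℕ) :
    killedSeq K P ξ n Set.univ ≤ 1 := by
  induction n with
  | zero => exact le_of_eq hξ.measure_univ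
  | succ n ih =>
      rw [killed_univ_succ]
      exact le_trans (le_trans (measure_mono (Set.subset_univ _)) le_rfl) ih

lemma killed_set_le (ξ : Measure M) (hξ : IsProbabilityMeasure ξ) (n : ℕ) (C : Set M) :
    killedSeq K P ξ n C ≤ 1 :=
  le_trans (measure_mono (Set.subset_univ _)) (killed_univ_le K P ξ hξ n)

lemma iterate_prob (ξ : Measure M) (hξ : IsProbabilityMeasure ξ) (n : ℕ) :
    IsProbabilityMeasure (iterateK K ξ n) := by
  induction n with
  | zero => exact hξ
  | succ n ih =>
      constructor
      show (iterateK K ξ n).bind ⇑K Set.univ = 1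
      rw [bindK_univ]
      exact ih.measure_univ

/-- renewal coefficients -/
noncomputable def regen (K : Kernel M M) (P : Set M) (ρ : Measure M) : ℕ → ENNReal
  | 0 => 1
  | m + 1 => iterateK K ρ m P

lemma iterate_rep (hP : MeasurableSet P) (hrestart : ∀ x ∈ P, K x = ρ) (m : ℕ) :
    iterateK K ρ m
      = ∑ j ∈ Finset.range (m + 1), (regen K P ρ j) • killedSeq K P ρ (m - j) := by
  induction m with
  | zero => simp [iterateK, killedSeq, regen]
  | succ m ih =>
      have hre : regen K P ρ (m + 1)
          = ∑ j ∈ Finset.range (m + 1), regen K P ρ j * killedSeq K P ρ (m - j) P := by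
        show iterateK K ρ m P = _
        rw [ih]
        simp [Measure.coe_finset_sum, Measure.smul_apply, smul_eq_mul]
      show (iterateK K ρ m).bind ⇑K = _
      rw [ih, bindK_finsum]
      have h1 : ∀ j ∈ Finset.range (m + 1),
          ((regen K P ρ j) • killedSeq K P ρ (m - j)).bind ⇑K
            = (regen K P ρ j) • killedSeq K P ρ (m + 1 - j)
              + (regen K P ρ j * killedSeq K P ρ (m - j) P) • ρ := by
        intro j hj
        have hj' := Finset.mem_range.mp hj
        rw [bindK_smul, killed_bind K P ρ hP hrestart, smul_add,
          show m - j + 1 = m + 1 - j from by omega, mul_smul]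
      rw [Finset.sum_congr rfl h1, Finset.sum_add_distrib, ← Finset.sum_smul, ← hre,
        Finset.sum_range_succ _ (m + 1), Nat.sub_self]
      rfl

lemma killed_partial_sum (hP : MeasurableSet P) (ξ : Measure M) [IsProbabilityMeasure ξ]
    (n : ℕ) : (killedSeq K P ξ n Set.univ).toReal
      = 1 - ∑ k ∈ Finset.range n, (killedSeq K P ξ k P).toReal := by
  induction n with
  | zero =>
      show (ξ Set.univ).toReal = _
      simp
  | succ n ih =>
      have hsplit : killedSeq K P ξ n P + killedSeq K P ξ n Pᶜ = killedSeq K P ξ n Set.univ :=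
        measure_add_measure_compl hP
      have h1 : killedSeq K P ξ (n + 1) Set.univ = killedSeq K P ξ n Pᶜ :=
        killed_univ_succ K P ξ n
      have hfin : ∀ C : Set M, killedSeq K P ξ n C ≠ ⊤ :=
        fun C => lt_of_le_of_lt (killed_set_le K P ξ ‹_› n C) ENNReal.one_lt_top |>.ne
      have h2 : (killedSeq K P ξ n P).toReal + (killedSeq K P ξ n Pᶜ).toReal
          = (killedSeq K P ξ n Set.univ).toReal := by
        rw [← ENNReal.toReal_add (hfin P) (hfin Pᶜ), hsplit]
      rw [h1, Finset.sum_range_succ]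
      linarith [ih, h2]

end MeasurePart

/-- **Convergence to the stationary flux.**  For the source-sink jump chain (restart at
`ρ` upon hitting `P`) with `E^ξ[σ_P] < ∞` for every initial distribution `ξ`, if the
aperiodicity condition `gcd{n ≥ 1 : P^ρ(σ_P = n−1) > 0} = 1` holds, then
`‖ξK^n − μ‖_TV → 0` for every probability measure `ξ`, where `μ = ν/ν(M)` is the
invariant measure; in particular `μ` is the unique invariant probability measure. -/
theorem convergence_to_stationarity
    {M : Type*} [MeasurableSpace M] [StandardBorelSpace M]
    (K : Kernel M M) [IsMarkovKernel K]
    (P : Set M) (hP : MeasurableSet P)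
    (ρ : Measure M) [IsProbabilityMeasure ρ] (hρP : ρ P = 0)
    (hrestart : ∀ x ∈ P, K x = ρ)
    (hσ : ∀ ξ : Measure M, IsProbabilityMeasure ξ →
      Measure.sum (killedSeq K P ξ) Set.univ ≠ ⊤)
    -- aperiodicity: gcd {n ≥ 1 : P^ρ(σ_P = n−1) > 0} = 1
    (hap : ∀ d : ℕ, (∀ n : ℕ, 1 ≤ n → killedSeq K P ρ (n - 1) P ≠ 0 → d ∣ n) → d = 1) :
    (∀ ξ : Measure M, IsProbabilityMeasure ξ →
      Tendsto (fun n => tvDist (iterateK K ξ n)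
        (((Measure.sum (killedSeq K P ρ)) Set.univ)⁻¹ • Measure.sum (killedSeq K P ρ)))
        atTop (nhds 0)) ∧
    (∀ μ' : Measure M, IsProbabilityMeasure μ' → μ'.bind K = μ' →
      μ' = ((Measure.sum (killedSeq K P ρ)) Set.univ)⁻¹ • Measure.sum (killedSeq K P ρ)) := by
  classical
  set ν : Measure M := Measure.sum (killedSeq K P ρ) with hν
  set ce : ENNReal := ν Set.univ with hce
  set μm : Measure M := ce⁻¹ • ν with hμm
  -- basic facts about ce
  have hceeq : ce = ∑' n, killedSeq K P ρ n Set.univ := by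
    rw [hce, hν, Measure.sum_apply _ MeasurableSet.univ]
  have hcetop : ce ≠ ⊤ := hσ ρ inferInstance
  have hκle : ∀ n, killedSeq K P ρ n Set.univ ≤ 1 := killed_univ_le K P ρ inferInstance
  have hκCle : ∀ n (C : Set M), killedSeq K P ρ n C ≤ 1 := killed_set_le K P ρ inferInstance
  have hκtop : ∀ n (C : Set M), killedSeq K P ρ n C ≠ ⊤ :=
    fun n C => (lt_of_le_of_lt (hκCle n C) ENNReal.one_lt_top).ne
  have hce1 : 1 ≤ ce := by
    rw [hceeq]
    calc (1 : ENNReal) = killedSeq K P ρ 0 Set.univ := by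
          show 1 = ρ Set.univ; simp
    _ ≤ _ := ENNReal.le_tsum 0
  have hce0 : ce ≠ 0 := by intro h; rw [h] at hce1; simp at hce1
  set c : ℝ := ce.toReal with hcdef
  have hc1 : (1 : ℝ) ≤ c := by
    have := ENNReal.toReal_mono hcetop hce1
    simpa using this
  have hcpos : 0 < c := by linarith
  set γ : ℝ := c⁻¹ with hγdef
  have hγ0 : 0 ≤ γ := by positivity
  have hγ1 : γ ≤ 1 := by rw [hγdef]; rw [inv_le_one_iff₀]; right; linarith
  have hγc : γ * c = 1 := by rw [hγdef]; field_simp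
  -- real sequences
  set b : ℕ → ℝ := fun n => (killedSeq K P ρ n Set.univ).toReal with hbdef
  set a : ℕ → ℝ := fun n => (killedSeq K P ρ n P).toReal with hadef
  have hb0 : ∀ n, 0 ≤ b n := fun n => ENNReal.toReal_nonneg
  have ha0 : ∀ n, 0 ≤ a n := fun n => ENNReal.toReal_nonneg
  have hb1 : ∀ n, b n ≤ 1 := fun n => by
    rw [hbdef]; simpa using ENNReal.toReal_mono (by simp) (hκle n)
  have hbsum : Summable b := ENNReal.summable_toReal (by rw [← hceeq]; exact hcetop)
  have htsum_b : ∑' n, b n = c := by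
    rw [hcdef, hceeq, ENNReal.tsum_toReal_eq (fun n => hκtop n _)]
  have hbc : HasSum b c := htsum_b ▸ hbsum.hasSum
  have hbrel : ∀ n, b n = 1 - ∑ k ∈ Finset.range n, a k :=
    fun n => killed_partial_sum K P hP ρ n
  have hb_to0 : Tendsto b atTop (nhds 0) := hbsum.tendsto_atTop_zero
  have hasum1 : HasSum a 1 := by
    rw [hasSum_iff_tendsto_nat_of_nonneg ha0]
    have h1 : ∀ n, ∑ k ∈ Finset.range n, a k = 1 - b n := fun n => by
      rw [hbrel n]; ring
    rw [show (fun n => ∑ i ∈ Finset.range n, a i) = fun n => 1 - b n from funext h1]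
    have := (tendsto_const_nhds (x := (1:ℝ)) (f := atTop)).sub hb_to0
    simpa using this
  -- the renewal sequence
  have hreg_le : ∀ n, regen K P ρ n ≤ 1 := by
    intro n
    match n with
    | 0 => exact le_rfl
    | m + 1 =>
        have := iterate_prob K ρ inferInstance m
        exact prob_le_one
  have hreg_top : ∀ n, regen K P ρ n ≠ ⊤ :=
    fun n => (lt_of_le_of_lt (hreg_le n) ENNReal.one_lt_top).ne
  set V : ℕ → ℝ := fun n => (regen K P ρ n).toReal with hVdef
  have hV0 : V 0 = 1 := by simp [hVdef, regen]
  have hVnn : ∀ n, 0 ≤ V n := fun n => ENNReal.toReal_nonneg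
  have hV1 : ∀ n, V n ≤ 1 := fun n => by
    rw [hVdef]; simpa using ENNReal.toReal_mono (by simp) (hreg_le n)
  -- the renewal recursion
  have hrec_e : ∀ n, regen K P ρ (n + 1)
      = ∑ k ∈ Finset.range (n + 1), killedSeq K P ρ k P * regen K P ρ (n - k) := by
    intro n
    have h1 : regen K P ρ (n + 1)
        = ∑ j ∈ Finset.range (n + 1), regen K P ρ j * killedSeq K P ρ (n - j) P := by
      show iterateK K ρ n P = _
      rw [iterate_rep K P ρ hP hrestart n]
      simp [Measure.smul_apply, smul_eq_mul]
    rw [h1, ← Finset.sum_range_reflect (fun k => killedSeq K P ρ k P * regen K P ρ (n - k)) (n + 1)]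
    refine Finset.sum_congr rfl fun j hj => ?_
    have hj' := Finset.mem_range.mp hj
    rw [show n + 1 - 1 - j = n - j from by omega, show n - (n - j) = j from by omega, mul_comm]
  have hVrec : ∀ n, V (n + 1) = ∑ k ∈ Finset.range (n + 1), a k * V (n - k) := by
    intro n
    show (regen K P ρ (n + 1)).toReal = _
    rw [hrec_e n, ENNReal.toReal_sum (fun k _ => ENNReal.mul_ne_top (hκtop k P) (hreg_top _))]
    exact Finset.sum_congr rfl fun k _ => ENNReal.toReal_mul
  -- aperiodicity
  have hgcd : ∀ d : ℕ, (∀ n : ℕ, 1 ≤ n → a (n - 1) ≠ 0 → d ∣ n) → d = 1 := by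
    intro d hd
    refine hap d fun n h1 h2 => hd n h1 ?_
    rw [hadef]
    exact ENNReal.toReal_ne_zero.mpr ⟨h2, hκtop _ _⟩
  have hVtend : Tendsto V atTop (nhds γ) :=
    renewal_EFP a b V c ha0 hasum1 hbrel hbc hV0 hVnn hV1 hVrec hgcd
  -- facts about μm
  have hμm_prob : IsProbabilityMeasure μm := by
    constructor
    rw [hμm, Measure.smul_apply, smul_eq_mul, ← hce]
    exact ENNReal.inv_mul_cancel hce0 hcetop
  have hgtop : ∀ C : Set M, (∑' i, killedSeq K P ρ i C) ≠ ⊤ := by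
    intro C
    refine (lt_of_le_of_lt (ENNReal.tsum_le_tsum fun i => measure_mono (Set.subset_univ C)) ?_).ne
    rw [← hceeq]
    exact hcetop.lt_top
  have hμmC : ∀ C : Set M, MeasurableSet C →
      (μm C).toReal = γ * ∑' i, (killedSeq K P ρ i C).toReal := by
    intro C hC
    rw [hμm, Measure.smul_apply, smul_eq_mul, hν, Measure.sum_apply _ hC,
      ENNReal.toReal_mul, ENNReal.toReal_inv, ← hcdef, ← hγdef,
      ENNReal.tsum_toReal_eq (fun i => hκtop i C)]
  have hgsummable : ∀ C : Set M, Summable (fun i => (killedSeq K P ρ i C).toReal) :=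
    fun C => ENNReal.summable_toReal (hgtop C)
  have hgle : ∀ (i : ℕ) (C : Set M), (killedSeq K P ρ i C).toReal ≤ b i :=
    fun i C => ENNReal.toReal_mono (hκtop i _) (measure_mono (Set.subset_univ C))
  -- the ρ-chain tv bound
  set T : ℕ → ℝ := fun m => (∑ i ∈ Finset.range (m + 1), |V (m - i) - γ| * b i)
    + γ * (c - ∑ i ∈ Finset.range (m + 1), b i) with hTdef
  have hpartial_le : ∀ m, ∑ i ∈ Finset.range m, b i ≤ c :=
    fun m => sum_le_hasSum _ (fun i _ => hb0 i) hbc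
  have hT0 : ∀ m, 0 ≤ T m := by
    intro m
    have h1 : 0 ≤ ∑ i ∈ Finset.range (m + 1), |V (m - i) - γ| * b i :=
      Finset.sum_nonneg fun i _ => mul_nonneg (abs_nonneg _) (hb0 i)
    have h2 := hpartial_le (m + 1)
    have : 0 ≤ γ * (c - ∑ i ∈ Finset.range (m + 1), b i) := by
      apply mul_nonneg hγ0; linarith
    rw [hTdef]; dsimp only; linarith
  have habs2 : ∀ n, |V n - γ| ≤ 2 := by
    intro n
    rw [abs_sub_le_iff]
    constructor <;> [skip; skip] <;> nlinarith [hVnn n, hV1 n, hγ0, hγ1]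
  have hTD : ∀ m, T m ≤ 2 * c + 1 := by
    intro m
    have h1 : ∑ i ∈ Finset.range (m + 1), |V (m - i) - γ| * b i
        ≤ ∑ i ∈ Finset.range (m + 1), 2 * b i :=
      Finset.sum_le_sum fun i _ => mul_le_mul_of_nonneg_right (habs2 _) (hb0 i)
    have h2 : ∑ i ∈ Finset.range (m + 1), 2 * b i ≤ 2 * c := by
      rw [← Finset.mul_sum]
      nlinarith [hpartial_le (m + 1)]
    have h3 : γ * (c - ∑ i ∈ Finset.range (m + 1), b i) ≤ 1 := by
      have hp : 0 ≤ ∑ i ∈ Finset.range (m + 1), b i :=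
        Finset.sum_nonneg fun i _ => hb0 i
      nlinarith [hγc]
    rw [hTdef]; dsimp only; linarith
  have hTtend : Tendsto T atTop (nhds 0) := by
    have h1 : Tendsto (fun m => ∑ i ∈ Finset.range (m + 1), |V (m - i) - γ| * b i)
        atTop (nhds 0) := by
      refine conv_tendsto_zero b (fun n => |V n - γ|) hb0 hbsum (fun n => abs_nonneg _) 2
        habs2 ?_
      have := (hVtend.sub_const γ).abs
      simpa using this
    have h2 : Tendsto (fun m => γ * (c - ∑ i ∈ Finset.range (m + 1), b i)) atTop (nhds 0) := by
      have hp : Tendsto (fun m => ∑ i ∈ Finset.range (m + 1), b i) atTop (nhds c) := by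
        have := hbc.tendsto_sum_nat.comp (tendsto_add_atTop_nat 1)
        exact this
      have := ((tendsto_const_nhds (x := c) (f := atTop)).sub hp).const_mul γ
      simpa using this
    have := h1.add h2
    rw [hTdef]
    simpa using this
  have hTkey : ∀ (m : ℕ) (C : Set M), MeasurableSet C →
      |(iterateK K ρ m C).toReal - (μm C).toReal| ≤ T m := by
    intro m C hC
    set g : ℕ → ℝ := fun i => (killedSeq K P ρ i C).toReal with hgdef
    have hg0 : ∀ i, 0 ≤ g i := fun i => ENNReal.toReal_nonneg
    have hgsum : Summable g := hgsummable C
    have hgb : ∀ i, g i ≤ b i := fun i => hgle i C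
    have h1 : (iterateK K ρ m C).toReal = ∑ i ∈ Finset.range (m + 1), V (m - i) * g i := by
      have e1 : iterateK K ρ m C
          = ∑ j ∈ Finset.range (m + 1), regen K P ρ j * killedSeq K P ρ (m - j) C := by
        rw [iterate_rep K P ρ hP hrestart m]
        simp [Measure.smul_apply, smul_eq_mul]
      rw [e1, ENNReal.toReal_sum (fun j _ => ENNReal.mul_ne_top (hreg_top _) (hκtop _ _)),
        ← Finset.sum_range_reflect (fun i => V (m - i) * g i) (m + 1)]
      refine Finset.sum_congr rfl fun j hj => ?_
      have hj' := Finset.mem_range.mp hj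
      rw [ENNReal.toReal_mul, show m + 1 - 1 - j = m - j from by omega,
        show m - (m - j) = j from by omega]
    set t : ℝ := ∑' i, g (i + (m + 1)) with htdef
    set p : ℝ := ∑ i ∈ Finset.range (m + 1), g i with hpdef
    have h2 : (μm C).toReal = γ * (p + t) := by
      rw [hμmC C hC, ← hgsum.sum_add_tsum_nat_add (m + 1)]
    have ht0 : 0 ≤ t := tsum_nonneg fun i => hg0 _
    have htail : t ≤ c - ∑ i ∈ Finset.range (m + 1), b i := by
      have hbt : ∑ i ∈ Finset.range (m + 1), b i + ∑' i, b (i + (m + 1)) = c := by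
        rw [← htsum_b]; exact hbsum.sum_add_tsum_nat_add (m + 1)
      have hle : t ≤ ∑' i, b (i + (m + 1)) :=
        Summable.tsum_le_tsum (fun i => hgb _) ((summable_nat_add_iff (m + 1)).mpr hgsum)
          ((summable_nat_add_iff (m + 1)).mpr hbsum)
      linarith
    rw [h1, h2]
    have e2 : ∑ i ∈ Finset.range (m + 1), (V (m - i) - γ) * g i
        = (∑ i ∈ Finset.range (m + 1), V (m - i) * g i) - γ * p := by
      rw [hpdef, Finset.mul_sum, ← Finset.sum_sub_distrib]
      exact Finset.sum_congr rfl fun i _ => by ring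
    have e3 : (∑ i ∈ Finset.range (m + 1), V (m - i) * g i) - γ * (p + t)
        = (∑ i ∈ Finset.range (m + 1), (V (m - i) - γ) * g i) - γ * t := by
      rw [e2]; ring
    rw [e3]
    calc |(∑ i ∈ Finset.range (m + 1), (V (m - i) - γ) * g i) - γ * t|
        ≤ |∑ i ∈ Finset.range (m + 1), (V (m - i) - γ) * g i| + |γ * t| := by
          rw [sub_eq_add_neg]
          refine (abs_add_le _ _).trans ?_
          rw [abs_neg]
      _ ≤ (∑ i ∈ Finset.range (m + 1), |V (m - i) - γ| * g i) + γ * t := by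
          refine add_le_add ?_ (le_of_eq (abs_of_nonneg (mul_nonneg hγ0 ht0)))
          refine (Finset.abs_sum_le_sum_abs _ _).trans ?_
          refine Finset.sum_le_sum fun i _ => ?_
          rw [abs_mul, abs_of_nonneg (hg0 i)]
      _ ≤ (∑ i ∈ Finset.range (m + 1), |V (m - i) - γ| * b i)
            + γ * (c - ∑ i ∈ Finset.range (m + 1), b i) := by
          refine add_le_add ?_ (mul_le_mul_of_nonneg_left htail hγ0)
          refine Finset.sum_le_sum fun i _ => ?_
          exact mul_le_mul_of_nonneg_left (hgb i) (abs_nonneg _)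
      _ = T m := by rw [hTdef]
  -- per-initial-measure bound
  have keyξ : ∀ ξ : Measure M, IsProbabilityMeasure ξ → ∃ E : ℕ → ℝ,
      Tendsto E atTop (nhds 0) ∧
      (∀ (n : ℕ) (C : Set M), MeasurableSet C →
        |(iterateK K ξ n C).toReal - (μm C).toReal| ≤ E n) := by
    intro ξ hξ
    haveI := hξ
    haveI := hμm_prob
    set bx : ℕ → ℝ := fun n => (killedSeq K P ξ n Set.univ).toReal with hbxdef
    set ax : ℕ → ℝ := fun k => (killedSeq K P ξ k P).toReal with haxdef
    have hκξtop : ∀ n (C : Set M), killedSeq K P ξ n C ≠ ⊤ :=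
      fun n C => (lt_of_le_of_lt (killed_set_le K P ξ hξ n C) ENNReal.one_lt_top).ne
    have hbx0 : ∀ n, 0 ≤ bx n := fun n => ENNReal.toReal_nonneg
    have hax0 : ∀ n, 0 ≤ ax n := fun n => ENNReal.toReal_nonneg
    have hbxrel : ∀ n, bx n = 1 - ∑ k ∈ Finset.range n, ax k :=
      fun n => killed_partial_sum K P hP ξ n
    have hbxsum : Summable bx := by
      refine ENNReal.summable_toReal ?_
      rw [← Measure.sum_apply _ MeasurableSet.univ]
      exact hσ ξ hξ
    have hbx_to0 : Tendsto bx atTop (nhds 0) := hbxsum.tendsto_atTop_zero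
    have haxle : ∀ k, ax k ≤ bx k :=
      fun k => ENNReal.toReal_mono (hκξtop k _) (measure_mono (Set.subset_univ P))
    have haxsum : Summable ax := Summable.of_nonneg_of_le hax0 haxle hbxsum
    refine ⟨fun n => bx n + (∑ k ∈ Finset.range n, T (n - 1 - k) * ax k) + bx n, ?_, ?_⟩
    · -- convergence of the bound
      have hconv := conv_tendsto_zero ax T hax0 haxsum hT0 (2 * c + 1) hTD hTtend
      have hcomp := hconv.comp (tendsto_sub_atTop_nat 1)
      have hmid : Tendsto (fun n => ∑ k ∈ Finset.range n, T (n - 1 - k) * ax k)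
          atTop (nhds 0) := by
        refine hcomp.congr' ?_
        filter_upwards [eventually_ge_atTop 1] with n hn
        show ∑ i ∈ Finset.range (n - 1 + 1), T (n - 1 - i) * ax i = _
        rw [show n - 1 + 1 = n from by omega]
      have := (hbx_to0.add hmid).add hbx_to0
      simpa using this
    · intro n C hC
      set r : ℕ → ℝ := fun k => (iterateK K ρ (n - 1 - k) C).toReal with hrdef
      have hiterρtop : ∀ m, iterateK K ρ m C ≠ ⊤ := by
        intro m
        haveI := iterate_prob K ρ inferInstance m
        exact measure_ne_top _ C
      have e1 : (iterateK K ξ n C).toReal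
          = (killedSeq K P ξ n C).toReal + ∑ k ∈ Finset.range n, ax k * r k := by
        have em : iterateK K ξ n C = killedSeq K P ξ n C
            + ∑ k ∈ Finset.range n, killedSeq K P ξ k P * iterateK K ρ (n - 1 - k) C := by
          rw [iterate_decomp K P ρ hP hrestart ξ n]
          simp [Measure.add_apply, Measure.smul_apply, smul_eq_mul]
        rw [em, ENNReal.toReal_add (hκξtop n C) ?_, ENNReal.toReal_sum ?_]
        · congr 1
          exact Finset.sum_congr rfl fun k _ => ENNReal.toReal_mul
        · intro k _
          exact ENNReal.mul_ne_top (hκξtop k P) (hiterρtop _)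
        · refine (ENNReal.sum_lt_top.mpr fun k _ => ?_).ne
          exact lt_of_le_of_lt (le_of_eq rfl)
            (ENNReal.mul_ne_top (hκξtop k P) (hiterρtop _)).lt_top
      set u : ℝ := (μm C).toReal with hudef
      have hu0 : 0 ≤ u := ENNReal.toReal_nonneg
      have hu1 : u ≤ 1 := by
        rw [hudef]
        simpa using ENNReal.toReal_mono (by simp) (prob_le_one (μ := μm) (s := C))
      have hq : (killedSeq K P ξ n C).toReal ≤ bx n :=
        ENNReal.toReal_mono (hκξtop n _) (measure_mono (Set.subset_univ C))
      have hq0 : 0 ≤ (killedSeq K P ξ n C).toReal := ENNReal.toReal_nonneg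
      have hsx : ∑ k ∈ Finset.range n, ax k = 1 - bx n := by
        have := hbxrel n; linarith
      have hbxle1 : bx n ≤ 1 := by
        have h0 : 0 ≤ ∑ k ∈ Finset.range n, ax k := Finset.sum_nonneg fun k _ => hax0 k
        linarith
      have hrk : ∀ k, |r k - u| ≤ T (n - 1 - k) := fun k => hTkey (n - 1 - k) C hC
      rw [e1]
      have e2 : ∑ k ∈ Finset.range n, ax k * (r k - u)
          = (∑ k ∈ Finset.range n, ax k * r k) - (∑ k ∈ Finset.range n, ax k) * u := by
        rw [Finset.sum_mul, ← Finset.sum_sub_distrib]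
        exact Finset.sum_congr rfl fun k _ => by ring
      have e3 : (killedSeq K P ξ n C).toReal + (∑ k ∈ Finset.range n, ax k * r k) - u
          = (killedSeq K P ξ n C).toReal + (∑ k ∈ Finset.range n, ax k * (r k - u))
            + ((∑ k ∈ Finset.range n, ax k) - 1) * u := by
        rw [e2]; ring
      rw [e3]
      calc |(killedSeq K P ξ n C).toReal + (∑ k ∈ Finset.range n, ax k * (r k - u))
            + ((∑ k ∈ Finset.range n, ax k) - 1) * u|
          ≤ |(killedSeq K P ξ n C).toReal + (∑ k ∈ Finset.range n, ax k * (r k - u))|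
            + |((∑ k ∈ Finset.range n, ax k) - 1) * u| := abs_add_le _ _
        _ ≤ (|(killedSeq K P ξ n C).toReal| + |∑ k ∈ Finset.range n, ax k * (r k - u)|)
            + |((∑ k ∈ Finset.range n, ax k) - 1) * u| := by
            exact add_le_add (abs_add_le _ _) le_rfl
        _ ≤ (bx n + ∑ k ∈ Finset.range n, T (n - 1 - k) * ax k) + bx n := by
            refine add_le_add (add_le_add ?_ ?_) ?_
            · rw [abs_of_nonneg hq0]; exact hq
            · refine (Finset.abs_sum_le_sum_abs _ _).trans ?_
              refine Finset.sum_le_sum fun k _ => ?_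
              rw [abs_mul, abs_of_nonneg (hax0 k), mul_comm]
              exact mul_le_mul_of_nonneg_right (hrk k) (hax0 k)
            · rw [hsx, abs_mul, show (1 : ℝ) - bx n - 1 = -(bx n) from by ring, abs_neg,
                abs_of_nonneg (hbx0 n), abs_of_nonneg hu0]
              calc bx n * u ≤ bx n * 1 := mul_le_mul_of_nonneg_left hu1 (hbx0 n)
                _ = bx n := mul_one _
        _ = bx n + (∑ k ∈ Finset.range n, T (n - 1 - k) * ax k) + bx n := by ring
  constructor
  · intro ξ hξ
    obtain ⟨E, hEt, hE⟩ := keyξ ξ hξ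
    haveI : Nonempty {C : Set M // MeasurableSet C} := ⟨⟨∅, MeasurableSet.empty⟩⟩
    have htv_le : ∀ n, tvDist (iterateK K ξ n) μm ≤ E n := by
      intro n
      exact ciSup_le fun C => hE n C.1 C.2
    have htv_nonneg : ∀ n, 0 ≤ tvDist (iterateK K ξ n) μm := by
      intro n
      have hbdd : BddAbove (Set.range fun C : {C : Set M // MeasurableSet C} =>
          |(iterateK K ξ n C.1).toReal - (μm C.1).toReal|) := by
        refine ⟨E n, ?_⟩
        rintro x ⟨C, rfl⟩
        exact hE n C.1 C.2
      have h0 : |(iterateK K ξ n (∅ : Set M)).toReal - (μm (∅ : Set M)).toReal| = 0 := by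
        simp
      have := le_ciSup hbdd ⟨(∅ : Set M), MeasurableSet.empty⟩
      rw [h0] at this
      exact this
    exact squeeze_zero htv_nonneg htv_le hEt
  · intro μ' hμ' hinv
    haveI := hμ'
    have hiter : ∀ n, iterateK K μ' n = μ' := by
      intro n
      induction n with
      | zero => rfl
      | succ n ih => show (iterateK K μ' n).bind ⇑K = μ'; rw [ih]; exact hinv
    obtain ⟨E, hEt, hE⟩ := keyξ μ' hμ'
    refine Measure.ext fun C hC => ?_
    have habs : ∀ n, |(μ' C).toReal - (μm C).toReal| ≤ E n := by
      intro n
      have := hE n C hC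
      rwa [hiter n] at this
    have hle0 : |(μ' C).toReal - (μm C).toReal| ≤ 0 :=
      ge_of_tendsto hEt (Eventually.of_forall habs)
    have heq : (μ' C).toReal = (μm C).toReal := by
      have := abs_nonneg ((μ' C).toReal - (μm C).toReal)
      have : |(μ' C).toReal - (μm C).toReal| = 0 := le_antisymm hle0 this
      linarith [abs_eq_zero.mp this, sub_eq_zero.mp (abs_eq_zero.mp this)]
    haveI := hμm_prob
    exact (ENNReal.toReal_eq_toReal_iff' (measure_ne_top μ' C) (measure_ne_top μm C)).mp heq
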